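/- Let ϱ : [0,π] → ℝ be continuous with ϱ(ξ) > 0 for all ξ ∈ [0,π], and set ϱ₀ := min_{ξ∈[0,π]} ϱ(ξ) and ϱ₁ := (2/π)∫₀^π ϱ(ξ) dξ. Let n ≥ 0 be an integer, μ ∈ ℝ, and let φ : [0,π] → ℝ be twice continuously differentiable, not identically zero, satisfying φ''(ξ) + (μ − ϱ(ξ))φ(ξ) = 0 on [0,π] with the Dirichlet–Neumann boundary conditions φ(0) = 0 and φ'(π) = 0, and suppose φ has exactly n zeros in the open interval (0,π). Then (n + 1/2)² + ϱ₀ ≤ μ ≤ (n + 1/2)² + ϱ₁. -/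

import Mathlib

open Set Real Filter intervalIntegral Topology MeasureTheory


lemma diff_of_c2 {φ : ℝ → ℝ} (hφ : ContDiff ℝ 2 φ) :
    Differentiable ℝ φ ∧ Differentiable ℝ (deriv φ) := by
  refine ⟨hφ.differentiable (by norm_num), ?_⟩
  have h2 : ContDiff ℝ (1 + 1) φ := by norm_num at hφ ⊢; exact hφ
  exact (contDiff_succ_iff_deriv.mp h2).2.2.differentiable one_ne_zero

lemma double_zero_forces_zero (ϱ : ℝ → ℝ) (μ : ℝ) (φ : ℝ → ℝ)
    (hϱ : ContinuousOn ϱ (Set.Icc 0 Real.pi))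
    (hφ : ContDiff ℝ 2 φ)
    (hode : ∀ ξ ∈ Set.Icc 0 Real.pi, deriv (deriv φ) ξ + (μ - ϱ ξ) * φ ξ = 0)
    (c : ℝ) (hc : c ∈ Set.Icc 0 Real.pi) (h0 : φ c = 0) (h1 : deriv φ c = 0) :
    ∀ ξ ∈ Set.Icc 0 Real.pi, φ ξ = 0 := by
  obtain ⟨hφ1, hφ2⟩ := diff_of_c2 hφ
  -- bound K
  obtain ⟨K, hK⟩ : ∃ K, ∀ ξ ∈ Set.Icc 0 Real.pi, |1 - (μ - ϱ ξ)| ≤ K := by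
    obtain ⟨C, hC⟩ := isCompact_Icc.exists_bound_of_continuousOn
      (f := fun ξ => 1 - (μ - ϱ ξ)) (by fun_prop)
    exact ⟨C, fun ξ hξ => by simpa using hC ξ hξ⟩
  have hK0 : 0 ≤ K := le_trans (abs_nonneg _) (hK 0 (by constructor <;> positivity))
  set E : ℝ → ℝ := fun ξ => (φ ξ)^2 + (deriv φ ξ)^2 with hE
  have hEder : ∀ ξ, HasDerivAt E
      (2*φ ξ*deriv φ ξ + 2*deriv φ ξ * deriv (deriv φ) ξ) ξ := by
    intro ξ
    have a1 : HasDerivAt φ (deriv φ ξ) ξ := (hφ1 ξ).hasDerivAt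
    have a2 : HasDerivAt (deriv φ) (deriv (deriv φ) ξ) ξ := (hφ2 ξ).hasDerivAt
    have := ((a1.pow 2).add (a2.pow 2))
    simpa [hE, Pi.add_def, Pi.pow_def, mul_comm, mul_assoc, mul_left_comm] using this
  have hEcont : Continuous E := by
    have := hφ1.continuous; have := hφ2.continuous; fun_prop
  have hEdiff : Differentiable ℝ E := fun ξ => ((hEder ξ).differentiableAt)
  have hEnn : ∀ ξ, 0 ≤ E ξ := fun ξ => by positivity
  have hEc : E c = 0 := by simp [hE, h0, h1]
  -- pointwise bound |E'| ≤ K E on Icc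
  have hbound : ∀ ξ ∈ Set.Icc 0 Real.pi, |deriv E ξ| ≤ K * E ξ := by
    intro ξ hξ
    have hd := (hEder ξ).deriv
    have hφ'' : deriv (deriv φ) ξ = -((μ - ϱ ξ) * φ ξ) := by
      have := hode ξ hξ; linarith
    rw [hd, hφ'']
    have : 2*φ ξ*deriv φ ξ + 2*deriv φ ξ * -((μ - ϱ ξ) * φ ξ)
        = (1 - (μ - ϱ ξ)) * (2 * φ ξ * deriv φ ξ) := by ring
    rw [this, abs_mul]
    have h2 : |2 * φ ξ * deriv φ ξ| ≤ E ξ := by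
      have hEξ : E ξ = (φ ξ)^2 + (deriv φ ξ)^2 := rfl
      rw [hEξ, abs_mul, abs_mul]
      simp only [abs_two]
      nlinarith [abs_nonneg (φ ξ), abs_nonneg (deriv φ ξ), sq_abs (φ ξ), sq_abs (deriv φ ξ),
        sq_nonneg (|φ ξ| - |deriv φ ξ|)]
    exact mul_le_mul (hK ξ hξ) h2 (abs_nonneg _) hK0
  -- forward: E = 0 on [c, π]
  have fwd : ∀ ξ ∈ Set.Icc c Real.pi, E ξ = 0 := by
    intro ξ hξ
    set g : ℝ → ℝ := fun t => E t * Real.exp (-(K*t)) with hg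
    have hganti : AntitoneOn g (Set.Icc c Real.pi) := by
      apply antitoneOn_of_deriv_nonpos (convex_Icc _ _)
      · exact (hEcont.mul (by fun_prop)).continuousOn
      · intro t ht
        exact ((hEdiff t).mul (by fun_prop)).differentiableWithinAt
      · intro t ht
        rw [interior_Icc] at ht
        have hder : HasDerivAt g (deriv E t * Real.exp (-(K*t)) + E t * (Real.exp (-(K*t)) * (-K))) t := by
          have b1 : HasDerivAt E (deriv E t) t := (hEder t).differentiableAt.hasDerivAt
          have b2 : HasDerivAt (fun s => Real.exp (-(K*s))) (Real.exp (-(K*t)) * (-K)) t := by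
            have : HasDerivAt (fun s : ℝ => -(K*s)) (-K) t := by
              simpa [Pi.neg_def] using ((hasDerivAt_id t).const_mul K).neg
            simpa using this.exp
          exact b1.mul b2
        rw [hder.deriv]
        have ht' : t ∈ Set.Icc 0 Real.pi := ⟨le_trans hc.1 (le_of_lt ht.1), le_of_lt ht.2⟩
        have h4 := hbound t ht'
        have h5 : deriv E t ≤ K * E t := le_trans (le_abs_self _) h4
        have h6 : 0 < Real.exp (-(K*t)) := Real.exp_pos _
        nlinarith
    have h7 : g ξ ≤ g c := hganti (by exact ⟨le_refl c, hc.2⟩) hξ hξ.1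
    have h8 : g c = 0 := by simp [hg, hEc]
    have h9 : 0 ≤ g ξ := mul_nonneg (hEnn ξ) (Real.exp_pos _).le
    have : g ξ = 0 := le_antisymm (h8 ▸ h7) h9
    have h10 : 0 < Real.exp (-(K*ξ)) := Real.exp_pos _
    have := mul_eq_zero.mp this
    rcases this with h | h
    · exact h
    · exact absurd h (ne_of_gt h10)
  -- backward: E = 0 on [0, c]
  have bwd : ∀ ξ ∈ Set.Icc 0 c, E ξ = 0 := by
    intro ξ hξ
    set g : ℝ → ℝ := fun t => E t * Real.exp (K*t) with hg
    have hgmono : MonotoneOn g (Set.Icc 0 c) := by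
      apply monotoneOn_of_deriv_nonneg (convex_Icc _ _)
      · exact (hEcont.mul (by fun_prop)).continuousOn
      · intro t ht
        exact ((hEdiff t).mul (by fun_prop)).differentiableWithinAt
      · intro t ht
        rw [interior_Icc] at ht
        have hder : HasDerivAt g (deriv E t * Real.exp (K*t) + E t * (Real.exp (K*t) * K)) t := by
          have b1 : HasDerivAt E (deriv E t) t := (hEder t).differentiableAt.hasDerivAt
          have b2 : HasDerivAt (fun s => Real.exp (K*s)) (Real.exp (K*t) * K) t := by
            have : HasDerivAt (fun s : ℝ => K*s) K t := by
              simpa using ((hasDerivAt_id t).const_mul K)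
            simpa using this.exp
          exact b1.mul b2
        rw [hder.deriv]
        have ht' : t ∈ Set.Icc 0 Real.pi := ⟨le_of_lt ht.1, le_trans (le_of_lt ht.2) hc.2⟩
        have h4 := hbound t ht'
        have h5 : -(K * E t) ≤ deriv E t := by
          have := neg_abs_le (deriv E t); linarith [abs_le.mp h4]
        have h6 : 0 < Real.exp (K*t) := Real.exp_pos _
        nlinarith
    have h7 : g ξ ≤ g c := hgmono hξ (by exact ⟨hc.1, le_refl c⟩) hξ.2
    have h8 : g c = 0 := by simp [hg, hEc]
    have h9 : 0 ≤ g ξ := mul_nonneg (hEnn ξ) (Real.exp_pos _).le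
    have : g ξ = 0 := le_antisymm (h8 ▸ h7) h9
    rcases mul_eq_zero.mp this with h | h
    · exact h
    · exact absurd h (ne_of_gt (Real.exp_pos _))
  intro ξ hξ
  have hEξ : E ξ = 0 := by
    rcases le_total ξ c with h | h
    · exact bwd ξ ⟨hξ.1, h⟩
    · exact fwd ξ ⟨h, hξ.2⟩
  have := sq_nonneg (deriv φ ξ)
  have hEξ' : (φ ξ)^2 + (deriv φ ξ)^2 = 0 := hEξ
  have h2 : (φ ξ)^2 = 0 := by nlinarith [sq_nonneg (φ ξ)]
  exact pow_eq_zero_iff (by norm_num) |>.mp h2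


noncomputable def Gfun (ϱ : ℝ → ℝ) (μ M : ℝ) (φ : ℝ → ℝ) (t : ℝ) : ℝ :=
  Real.sqrt M * ((μ - ϱ t) * φ t ^ 2 + deriv φ t ^ 2) / (M * φ t ^ 2 + deriv φ t ^ 2)

noncomputable def Tfun (M : ℝ) (φ : ℝ → ℝ) (t : ℝ) : ℝ :=
  Real.pi / 2 - Real.arctan (deriv φ t / (Real.sqrt M * φ t))

lemma Tfun_hasDeriv (ϱ : ℝ → ℝ) (μ M : ℝ) (φ : ℝ → ℝ)
    (hφ1 : Differentiable ℝ φ) (hφ2 : Differentiable ℝ (deriv φ))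
    (hM : 0 < M) {ξ : ℝ} (hφξ : φ ξ ≠ 0)
    (hodeξ : deriv (deriv φ) ξ + (μ - ϱ ξ) * φ ξ = 0) :
    HasDerivAt (Tfun M φ) (Gfun ϱ μ M φ ξ) ξ := by
  have hs : 0 < Real.sqrt M := Real.sqrt_pos.mpr hM
  set s := Real.sqrt M with hsdef
  have hs2 : s ^ 2 = M := Real.sq_sqrt hM.le
  have hden : s * φ ξ ≠ 0 := mul_ne_zero hs.ne' hφξ
  have hu : HasDerivAt (fun t => deriv φ t / (s * φ t))
      ((deriv (deriv φ) ξ * (s * φ ξ) - deriv φ ξ * (s * deriv φ ξ)) / (s * φ ξ) ^ 2) ξ := by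
    have h1 : HasDerivAt (deriv φ) (deriv (deriv φ) ξ) ξ := (hφ2 ξ).hasDerivAt
    have h2 : HasDerivAt (fun t => s * φ t) (s * deriv φ ξ) ξ := ((hφ1 ξ).hasDerivAt).const_mul s
    exact h1.div h2 hden
  have harc := (Real.hasDerivAt_arctan (deriv φ ξ / (s * φ ξ))).comp ξ hu
  have hT := (hasDerivAt_const ξ (Real.pi / 2)).sub harc
  have hTT : HasDerivAt (Tfun M φ)
      (0 - 1 / (1 + (deriv φ ξ / (s * φ ξ)) ^ 2) *
        ((deriv (deriv φ) ξ * (s * φ ξ) - deriv φ ξ * (s * deriv φ ξ)) / (s * φ ξ) ^ 2)) ξ := by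
    unfold Tfun
    simpa [Tfun, Function.comp, Pi.sub_def, hsdef] using hT
  convert hTT using 1
  have hφ'' : deriv (deriv φ) ξ = -((μ - ϱ ξ) * φ ξ) := by linarith
  rw [Gfun, hφ'', ← hs2]
  have hD : s ^ 2 * φ ξ ^ 2 + deriv φ ξ ^ 2 ≠ 0 := by positivity
  have h1u : 1 + (deriv φ ξ / (s * φ ξ)) ^ 2 ≠ 0 := by positivity
  field_simp
  rw [Real.sqrt_sq hs.le]
  ring

lemma shared_identity (ϱ : ℝ → ℝ) (μ M : ℝ) (φ : ℝ → ℝ)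
    (hϱ : ContinuousOn ϱ (Set.Icc 0 Real.pi))
    (hφ1 : Differentiable ℝ φ) (hφ2 : Differentiable ℝ (deriv φ))
    (hode : ∀ ξ ∈ Set.Icc 0 Real.pi, deriv (deriv φ) ξ + (μ - ϱ ξ) * φ ξ = 0)
    (hM : 0 < M) (a b : ℝ) (ha0 : 0 ≤ a) (hab : a < b) (hbπ : b ≤ Real.pi)
    (hφa : φ a = 0) (hφ'a : deriv φ a ≠ 0)
    (hnz : ∀ ξ ∈ Set.Ioc a b, φ ξ ≠ 0) :
    Tfun M φ b = ∫ t in a..b, Gfun ϱ μ M φ t := by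
  have hs : 0 < Real.sqrt M := Real.sqrt_pos.mpr hM
  set s := Real.sqrt M with hsdef
  set G := Gfun ϱ μ M φ with hGdef
  set T := Tfun M φ with hTdef
  have hsub : Set.Icc a b ⊆ Set.Icc 0 Real.pi := Set.Icc_subset_Icc ha0 hbπ
  have hDpos : ∀ ξ ∈ Set.Icc a b, 0 < M * φ ξ ^ 2 + deriv φ ξ ^ 2 := by
    intro ξ hξ
    rcases eq_or_ne ξ a with rfl | hne
    · have h2 : 0 < deriv φ ξ ^ 2 :=
        lt_of_le_of_ne (sq_nonneg _) (Ne.symm (pow_ne_zero 2 hφ'a))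
      nlinarith [sq_nonneg (φ ξ)]
    · have hφne := hnz ξ ⟨lt_of_le_of_ne hξ.1 (Ne.symm hne), hξ.2⟩
      have h1 : 0 < φ ξ ^ 2 := lt_of_le_of_ne (sq_nonneg _) (Ne.symm (pow_ne_zero 2 hφne))
      nlinarith [sq_nonneg (deriv φ ξ)]
  have hGcont : ContinuousOn G (Set.Icc a b) := by
    apply ContinuousOn.div
    · apply ContinuousOn.mul continuousOn_const
      apply ContinuousOn.add
      · exact ((continuousOn_const.sub (hϱ.mono hsub)).mul
          ((hφ1.continuous.pow 2).continuousOn))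
      · exact ((hφ2.continuous.pow 2)).continuousOn
    · exact (continuousOn_const.mul ((hφ1.continuous.pow 2).continuousOn)).add
        ((hφ2.continuous.pow 2)).continuousOn
    · exact fun ξ hξ => (hDpos ξ hξ).ne'
  have hGIntOn : MeasureTheory.IntegrableOn G (Set.uIcc a b) MeasureTheory.volume := by
    rw [Set.uIcc_of_le hab.le]
    exact hGcont.integrableOn_Icc
  have hGint : IntervalIntegrable G MeasureTheory.volume a b :=
    (hGcont.mono (by rw [Set.uIcc_of_le hab.le])).intervalIntegrable
  have hFTC : ∀ a' ∈ Set.Ioc a b, ∫ t in a'..b, G t = T b - T a' := by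
    intro a' ha'
    apply intervalIntegral.integral_eq_sub_of_hasDerivAt
    · intro x hx
      rw [Set.uIcc_of_le ha'.2] at hx
      have hx1 : x ∈ Set.Ioc a b := ⟨lt_of_lt_of_le ha'.1 hx.1, hx.2⟩
      have hx2 : x ∈ Set.Icc 0 Real.pi := hsub ⟨hx1.1.le, hx1.2⟩
      exact Tfun_hasDeriv ϱ μ M φ hφ1 hφ2 hM (hnz x hx1) (hode x hx2)
    · exact (hGcont.mono (Set.uIcc_subset_Icc ⟨ha'.1.le, ha'.2⟩
        ⟨hab.le, le_refl b⟩)).intervalIntegrable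
  -- limit of the integral
  have hlim1 : Tendsto (fun a' => ∫ t in a'..b, G t) (𝓝[>] a)
      (𝓝 (∫ t in a..b, G t)) := by
    have hcont := intervalIntegral.continuousOn_primitive_interval_left
      (f := G) (μ := MeasureTheory.volume) (a := a) (b := b) hGIntOn
    have h1 : ContinuousWithinAt (fun x => ∫ t in x..b, G t) (Set.uIcc a b) a :=
      hcont a (by rw [Set.uIcc_of_le hab.le]; exact ⟨le_refl a, hab.le⟩)
    have h2 : Tendsto (fun x => ∫ t in x..b, G t) (𝓝[Set.uIcc a b] a)
        (𝓝 (∫ t in a..b, G t)) := h1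
    refine h2.mono_left ?_
    rw [Set.uIcc_of_le hab.le, ← nhdsWithin_Ioc_eq_nhdsGT hab]
    exact nhdsWithin_mono a Set.Ioc_subset_Icc_self
  -- limit of T at a from the right
  have hTa : Tendsto T (𝓝[>] a) (𝓝 0) := by
    have hslope : Tendsto (fun ξ => φ ξ / (ξ - a)) (𝓝[>] a) (𝓝 (deriv φ a)) := by
      have h := hasDerivAt_iff_tendsto_slope.mp (hφ1 a).hasDerivAt
      have h2 : Tendsto (slope φ a) (𝓝[>] a) (𝓝 (deriv φ a)) :=
        h.mono_left (nhdsWithin_mono a (fun x hx => ne_of_gt hx))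
      refine h2.congr (fun ξ => ?_)
      rw [slope_def_field, hφa, sub_zero]
    have hA : Tendsto (fun ξ => deriv φ ξ / (s * (φ ξ / (ξ - a)))) (𝓝[>] a)
        (𝓝 (deriv φ a / (s * deriv φ a))) := by
      apply Tendsto.div
      · exact (hφ2.continuous.tendsto a).mono_left nhdsWithin_le_nhds
      · exact tendsto_const_nhds.mul hslope
      · exact mul_ne_zero hs.ne' hφ'a
    have hval : deriv φ a / (s * deriv φ a) = 1 / s := by
      field_simp
    have hB : Tendsto (fun ξ => (ξ - a)⁻¹) (𝓝[>] a) atTop := by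
      apply tendsto_inv_nhdsGT_zero.comp
      rw [tendsto_nhdsWithin_iff]
      constructor
      · have : Tendsto (fun ξ : ℝ => ξ - a) (𝓝 a) (𝓝 (a - a)) :=
          (continuous_id.sub continuous_const).tendsto a
        simpa using this.mono_left nhdsWithin_le_nhds
      · filter_upwards [self_mem_nhdsWithin] with ξ (hξ : a < ξ)
        simpa using sub_pos.mpr hξ
    have hu : Tendsto (fun ξ => deriv φ ξ / (s * φ ξ)) (𝓝[>] a) atTop := by
      have hprod : Tendsto (fun ξ => deriv φ ξ / (s * (φ ξ / (ξ - a))) * (ξ - a)⁻¹)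
          (𝓝[>] a) atTop := by
        apply Tendsto.pos_mul_atTop (C := 1 / s) (by positivity) _ hB
        rw [← hval]; exact hA
      apply hprod.congr'
      filter_upwards [Ioc_mem_nhdsGT_of_mem ⟨le_refl a, hab⟩] with ξ hξ
      have hξa : ξ - a ≠ 0 := sub_ne_zero.mpr (ne_of_gt hξ.1)
      have hφξ : φ ξ ≠ 0 := hnz ξ hξ
      field_simp
    have harc : Tendsto (fun ξ => Real.arctan (deriv φ ξ / (s * φ ξ))) (𝓝[>] a)
        (𝓝 (Real.pi / 2)) :=
      (Real.tendsto_arctan_atTop.mono_right nhdsWithin_le_nhds).comp hu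
    have : Tendsto T (𝓝[>] a) (𝓝 (Real.pi / 2 - Real.pi / 2)) :=
      tendsto_const_nhds.sub harc
    simpa using this
  have hlim2 : Tendsto (fun a' => T b - T a') (𝓝[>] a) (𝓝 (T b)) := by
    have h := (tendsto_const_nhds : Tendsto (fun _ : ℝ => T b) (𝓝[>] a) (𝓝 (T b))).sub hTa
    simpa using h
  have heq : (fun a' => T b - T a') =ᶠ[𝓝[>] a] (fun a' => ∫ t in a'..b, G t) := by
    filter_upwards [Ioc_mem_nhdsGT_of_mem ⟨le_refl a, hab⟩] with a' ha'
    exact (hFTC a' ha').symm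
  exact tendsto_nhds_unique (hlim2.congr' heq) hlim1

lemma neumann_identity (ϱ : ℝ → ℝ) (μ M : ℝ) (φ : ℝ → ℝ)
    (hϱ : ContinuousOn ϱ (Set.Icc 0 Real.pi))
    (hφ1 : Differentiable ℝ φ) (hφ2 : Differentiable ℝ (deriv φ))
    (hode : ∀ ξ ∈ Set.Icc 0 Real.pi, deriv (deriv φ) ξ + (μ - ϱ ξ) * φ ξ = 0)
    (hM : 0 < M) (a : ℝ) (ha0 : 0 ≤ a) (haπ : a < Real.pi)
    (hφa : φ a = 0) (hφ'a : deriv φ a ≠ 0)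
    (hnz : ∀ ξ ∈ Set.Ioc a Real.pi, φ ξ ≠ 0)
    (hbcπ : deriv φ Real.pi = 0) :
    ∫ t in a..Real.pi, Gfun ϱ μ M φ t = Real.pi / 2 := by
  have h := shared_identity ϱ μ M φ hϱ hφ1 hφ2 hode hM a Real.pi ha0 haπ (le_refl _)
    hφa hφ'a hnz
  rw [← h, Tfun, hbcπ, zero_div, Real.arctan_zero, sub_zero]

lemma dirichlet_identity (ϱ : ℝ → ℝ) (μ M : ℝ) (φ : ℝ → ℝ)
    (hϱ : ContinuousOn ϱ (Set.Icc 0 Real.pi))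
    (hφ1 : Differentiable ℝ φ) (hφ2 : Differentiable ℝ (deriv φ))
    (hode : ∀ ξ ∈ Set.Icc 0 Real.pi, deriv (deriv φ) ξ + (μ - ϱ ξ) * φ ξ = 0)
    (hM : 0 < M) (a b : ℝ) (ha0 : 0 ≤ a) (hab : a < b) (hbπ : b ≤ Real.pi)
    (hφa : φ a = 0) (hφ'a : deriv φ a ≠ 0) (hφb : φ b = 0) (hφ'b : deriv φ b ≠ 0)
    (hnz : ∀ ξ ∈ Set.Ioo a b, φ ξ ≠ 0) :
    ∫ t in a..b, Gfun ϱ μ M φ t = Real.pi := by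
  have hs : 0 < Real.sqrt M := Real.sqrt_pos.mpr hM
  set s := Real.sqrt M with hsdef
  set G := Gfun ϱ μ M φ with hGdef
  set T := Tfun M φ with hTdef
  have hsub : Set.Icc a b ⊆ Set.Icc 0 Real.pi := Set.Icc_subset_Icc ha0 hbπ
  have hDpos : ∀ ξ ∈ Set.Icc a b, 0 < M * φ ξ ^ 2 + deriv φ ξ ^ 2 := by
    intro ξ hξ
    rcases eq_or_ne ξ a with rfl | hnea
    · have h2 : 0 < deriv φ ξ ^ 2 :=
        lt_of_le_of_ne (sq_nonneg _) (Ne.symm (pow_ne_zero 2 hφ'a))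
      nlinarith [sq_nonneg (φ ξ)]
    rcases eq_or_ne ξ b with rfl | hneb
    · have h2 : 0 < deriv φ ξ ^ 2 :=
        lt_of_le_of_ne (sq_nonneg _) (Ne.symm (pow_ne_zero 2 hφ'b))
      nlinarith [sq_nonneg (φ ξ)]
    · have hφne := hnz ξ ⟨lt_of_le_of_ne hξ.1 (Ne.symm hnea), lt_of_le_of_ne hξ.2 hneb⟩
      have h1 : 0 < φ ξ ^ 2 := lt_of_le_of_ne (sq_nonneg _) (Ne.symm (pow_ne_zero 2 hφne))
      nlinarith [sq_nonneg (deriv φ ξ)]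
  have hGcont : ContinuousOn G (Set.Icc a b) := by
    apply ContinuousOn.div
    · apply ContinuousOn.mul continuousOn_const
      exact ((continuousOn_const.sub (hϱ.mono hsub)).mul
          ((hφ1.continuous.pow 2).continuousOn)).add ((hφ2.continuous.pow 2)).continuousOn
    · exact (continuousOn_const.mul ((hφ1.continuous.pow 2).continuousOn)).add
        ((hφ2.continuous.pow 2)).continuousOn
    · exact fun ξ hξ => (hDpos ξ hξ).ne'
  have hGIntOn : MeasureTheory.IntegrableOn G (Set.uIcc a b) MeasureTheory.volume := by
    rw [Set.uIcc_of_le hab.le]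
    exact hGcont.integrableOn_Icc
  -- identity for b' < b
  have hFTC : ∀ b' ∈ Set.Ioo a b, T b' = ∫ t in a..b', G t := by
    intro b' hb'
    exact shared_identity ϱ μ M φ hϱ hφ1 hφ2 hode hM a b' ha0 hb'.1
      (le_trans hb'.2.le hbπ) hφa hφ'a
      (fun ξ hξ => hnz ξ ⟨hξ.1, lt_of_le_of_lt hξ.2 hb'.2⟩)
  -- limit of the integral
  have hlim1 : Tendsto (fun b' => ∫ t in a..b', G t) (𝓝[<] b)
      (𝓝 (∫ t in a..b, G t)) := by
    have hcont := intervalIntegral.continuousOn_primitive_interval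
      (f := G) (μ := MeasureTheory.volume) (a := a) (b := b) hGIntOn
    have h1 : ContinuousWithinAt (fun x => ∫ t in a..x, G t) (Set.uIcc a b) b :=
      hcont b (by rw [Set.uIcc_of_le hab.le]; exact ⟨hab.le, le_refl b⟩)
    refine h1.mono_left ?_
    rw [Set.uIcc_of_le hab.le, ← nhdsWithin_Ico_eq_nhdsLT hab]
    exact nhdsWithin_mono b Set.Ico_subset_Icc_self
  -- limit of T at b from the left
  have hTb : Tendsto T (𝓝[<] b) (𝓝 Real.pi) := by
    have hslope : Tendsto (fun ξ => φ ξ / (ξ - b)) (𝓝[<] b) (𝓝 (deriv φ b)) := by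
      have h := hasDerivAt_iff_tendsto_slope.mp (hφ1 b).hasDerivAt
      have h2 : Tendsto (slope φ b) (𝓝[<] b) (𝓝 (deriv φ b)) :=
        h.mono_left (nhdsWithin_mono b (fun x hx => ne_of_lt hx))
      refine h2.congr (fun ξ => ?_)
      rw [slope_def_field, hφb, sub_zero]
    have hA : Tendsto (fun ξ => deriv φ ξ / (s * (φ ξ / (ξ - b)))) (𝓝[<] b)
        (𝓝 (deriv φ b / (s * deriv φ b))) := by
      apply Tendsto.div
      · exact (hφ2.continuous.tendsto b).mono_left nhdsWithin_le_nhds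
      · exact tendsto_const_nhds.mul hslope
      · exact mul_ne_zero hs.ne' hφ'b
    have hval : deriv φ b / (s * deriv φ b) = 1 / s := by
      field_simp
    have hB : Tendsto (fun ξ => (ξ - b)⁻¹) (𝓝[<] b) atBot := by
      have h1 : Tendsto (fun ξ => (b - ξ)⁻¹) (𝓝[<] b) atTop := by
        apply tendsto_inv_nhdsGT_zero.comp
        rw [tendsto_nhdsWithin_iff]
        constructor
        · have : Tendsto (fun ξ : ℝ => b - ξ) (𝓝 b) (𝓝 (b - b)) :=
            (continuous_const.sub continuous_id).tendsto b
          simpa using this.mono_left nhdsWithin_le_nhds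
        · filter_upwards [self_mem_nhdsWithin] with ξ (hξ : ξ < b)
          simpa using sub_pos.mpr hξ
      have h2 := tendsto_neg_atTop_atBot.comp h1
      refine h2.congr (fun ξ => ?_)
      simp [Function.comp]
      rw [← inv_neg, neg_sub]
    have hu : Tendsto (fun ξ => deriv φ ξ / (s * φ ξ)) (𝓝[<] b) atBot := by
      have hprod : Tendsto (fun ξ => deriv φ ξ / (s * (φ ξ / (ξ - b))) * (ξ - b)⁻¹)
          (𝓝[<] b) atBot := by
        apply Tendsto.pos_mul_atBot (C := 1 / s) (by positivity) _ hB
        rw [← hval]; exact hA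
      apply hprod.congr'
      filter_upwards [Ioo_mem_nhdsLT_of_mem ⟨hab, le_refl b⟩] with ξ hξ
      have hξb : ξ - b ≠ 0 := sub_ne_zero.mpr (ne_of_lt hξ.2)
      have hφξ : φ ξ ≠ 0 := hnz ξ hξ
      field_simp
    have harc : Tendsto (fun ξ => Real.arctan (deriv φ ξ / (s * φ ξ))) (𝓝[<] b)
        (𝓝 (-(Real.pi / 2))) :=
      (Real.tendsto_arctan_atBot.mono_right nhdsWithin_le_nhds).comp hu
    have h3 : Tendsto T (𝓝[<] b) (𝓝 (Real.pi / 2 - -(Real.pi / 2))) :=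
      tendsto_const_nhds.sub harc
    have : Real.pi / 2 - -(Real.pi / 2) = Real.pi := by ring
    rwa [this] at h3
  have heq : T =ᶠ[𝓝[<] b] (fun b' => ∫ t in a..b', G t) := by
    filter_upwards [Ioo_mem_nhdsLT_of_mem ⟨hab, le_refl b⟩] with b' hb'
    exact hFTC b' hb'
  exact (tendsto_nhds_unique (hTb.congr' heq) hlim1).symm

lemma interval_est (ϱ : ℝ → ℝ) (μ M : ℝ) (φ : ℝ → ℝ)
    (hϱ : ContinuousOn ϱ (Set.Icc 0 Real.pi))
    (hφ1 : Differentiable ℝ φ) (hφ2 : Differentiable ℝ (deriv φ))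
    (hM : 0 < M) (a b : ℝ) (ha0 : 0 ≤ a) (hab : a < b) (hbπ : b ≤ Real.pi)
    (hqM : ∀ ξ ∈ Set.Icc 0 Real.pi, μ - ϱ ξ ≤ M)
    (hD : ∀ ξ ∈ Set.Icc a b, 0 < M * φ ξ ^ 2 + deriv φ ξ ^ 2)
    (Δ : ℝ) (hId : ∫ t in a..b, Gfun ϱ μ M φ t = Δ) :
    Δ ≤ Real.sqrt M * (b - a) ∧
      (∫ t in a..b, (μ - ϱ t)) ≤ Real.sqrt M * Δ := by
  have hs : 0 < Real.sqrt M := Real.sqrt_pos.mpr hM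
  set s := Real.sqrt M with hsdef
  have hs2 : s ^ 2 = M := Real.sq_sqrt hM.le
  set G := Gfun ϱ μ M φ with hGdef
  have hsub : Set.Icc a b ⊆ Set.Icc 0 Real.pi := Set.Icc_subset_Icc ha0 hbπ
  have hGcont : ContinuousOn G (Set.Icc a b) := by
    apply ContinuousOn.div
    · apply ContinuousOn.mul continuousOn_const
      exact ((continuousOn_const.sub (hϱ.mono hsub)).mul
          ((hφ1.continuous.pow 2).continuousOn)).add ((hφ2.continuous.pow 2)).continuousOn
    · exact (continuousOn_const.mul ((hφ1.continuous.pow 2).continuousOn)).add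
        ((hφ2.continuous.pow 2)).continuousOn
    · exact fun ξ hξ => (hD ξ hξ).ne'
  have hGint : IntervalIntegrable G MeasureTheory.volume a b :=
    (hGcont.mono (by rw [Set.uIcc_of_le hab.le])).intervalIntegrable
  have hqcont : ContinuousOn (fun t => μ - ϱ t) (Set.Icc a b) :=
    continuousOn_const.sub (hϱ.mono hsub)
  have hqint : IntervalIntegrable (fun t => μ - ϱ t) MeasureTheory.volume a b :=
    (hqcont.mono (by rw [Set.uIcc_of_le hab.le])).intervalIntegrable
  constructor
  · rw [← hId]
    have h1 : (∫ t in a..b, G t) ≤ ∫ t in a..b, s := by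
      apply intervalIntegral.integral_mono_on hab.le hGint intervalIntegrable_const
      intro ξ hξ
      have hDξ := hD ξ hξ
      have hq := hqM ξ (hsub hξ)
      rw [hGdef, Gfun, ← hsdef, div_le_iff₀ hDξ]
      nlinarith [hs, mul_nonneg (sub_nonneg.mpr hq) (sq_nonneg (φ ξ))]
    simpa [mul_comm] using h1
  · rw [← hId]
    rw [← intervalIntegral.integral_const_mul]
    apply intervalIntegral.integral_mono_on hab.le hqint (hGint.const_mul s)
    intro ξ hξ
    have hDξ := hD ξ hξ
    have hq := hqM ξ (hsub hξ)
    have hss : s * s = M := Real.mul_self_sqrt hM.le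
    rw [hGdef, Gfun, ← hsdef, mul_div_assoc', ← mul_assoc, hss, le_div_iff₀ hDξ]
    nlinarith [mul_nonneg (sub_nonneg.mpr hq) (sq_nonneg (deriv φ ξ))]

lemma Dpos_Ioc (M : ℝ) (φ : ℝ → ℝ) (hM : 0 < M) (a b : ℝ)
    (hφ'a : deriv φ a ≠ 0) (hnz : ∀ ξ ∈ Set.Ioc a b, φ ξ ≠ 0) :
    ∀ ξ ∈ Set.Icc a b, 0 < M * φ ξ ^ 2 + deriv φ ξ ^ 2 := by
  intro ξ hξ
  rcases eq_or_ne ξ a with rfl | hne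
  · have h2 : 0 < deriv φ ξ ^ 2 :=
      lt_of_le_of_ne (sq_nonneg _) (Ne.symm (pow_ne_zero 2 hφ'a))
    nlinarith [sq_nonneg (φ ξ)]
  · have hφne := hnz ξ ⟨lt_of_le_of_ne hξ.1 (Ne.symm hne), hξ.2⟩
    have h1 : 0 < φ ξ ^ 2 := lt_of_le_of_ne (sq_nonneg _) (Ne.symm (pow_ne_zero 2 hφne))
    nlinarith [sq_nonneg (deriv φ ξ)]

lemma Dpos_Ioo (M : ℝ) (φ : ℝ → ℝ) (hM : 0 < M) (a b : ℝ)
    (hφ'a : deriv φ a ≠ 0) (hφ'b : deriv φ b ≠ 0)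
    (hnz : ∀ ξ ∈ Set.Ioo a b, φ ξ ≠ 0) :
    ∀ ξ ∈ Set.Icc a b, 0 < M * φ ξ ^ 2 + deriv φ ξ ^ 2 := by
  intro ξ hξ
  rcases eq_or_ne ξ b with rfl | hne
  · have h2 : 0 < deriv φ ξ ^ 2 :=
      lt_of_le_of_ne (sq_nonneg _) (Ne.symm (pow_ne_zero 2 hφ'b))
    nlinarith [sq_nonneg (φ ξ)]
  rcases eq_or_ne ξ a with rfl | hnea
  · have h2 : 0 < deriv φ ξ ^ 2 :=
      lt_of_le_of_ne (sq_nonneg _) (Ne.symm (pow_ne_zero 2 hφ'a))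
    nlinarith [sq_nonneg (φ ξ)]
  · have hφne := hnz ξ ⟨lt_of_le_of_ne hξ.1 (Ne.symm hnea), lt_of_le_of_ne hξ.2 hne⟩
    have h1 : 0 < φ ξ ^ 2 := lt_of_le_of_ne (sq_nonneg _) (Ne.symm (pow_ne_zero 2 hφne))
    nlinarith [sq_nonneg (deriv φ ξ)]

lemma aux_induction (ϱ : ℝ → ℝ) (μ M : ℝ) (φ : ℝ → ℝ)
    (hϱ : ContinuousOn ϱ (Set.Icc 0 Real.pi))
    (hφ1 : Differentiable ℝ φ) (hφ2 : Differentiable ℝ (deriv φ))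
    (hode : ∀ ξ ∈ Set.Icc 0 Real.pi, deriv (deriv φ) ξ + (μ - ϱ ξ) * φ ξ = 0)
    (hbcπ : deriv φ Real.pi = 0)
    (hM : 0 < M) (hqM : ∀ ξ ∈ Set.Icc 0 Real.pi, μ - ϱ ξ ≤ M)
    (hsimp : ∀ c ∈ Set.Icc 0 Real.pi, φ c = 0 → deriv φ c ≠ 0)
    (hφπ : φ Real.pi ≠ 0) :
    ∀ n : ℕ, ∀ a : ℝ, 0 ≤ a → a < Real.pi → φ a = 0 →
      ({ξ ∈ Set.Ioo a Real.pi | φ ξ = 0}.encard = n) →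
      (((n : ℝ) + 1/2) * Real.pi ≤ Real.sqrt M * (Real.pi - a) ∧
        (∫ t in a..Real.pi, (μ - ϱ t)) ≤ Real.sqrt M * (((n : ℝ) + 1/2) * Real.pi)) := by
  intro n
  induction n with
  | zero =>
    intro a ha0 haπ hφa hZ
    have hempty : {ξ ∈ Set.Ioo a Real.pi | φ ξ = 0} = ∅ := by
      rw [← Set.encard_eq_zero]; simpa using hZ
    have hnz : ∀ ξ ∈ Set.Ioc a Real.pi, φ ξ ≠ 0 := by
      intro ξ hξ hc
      rcases eq_or_lt_of_le hξ.2 with rfl | hlt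
      · exact hφπ hc
      · have hmem : ξ ∈ {ξ ∈ Set.Ioo a Real.pi | φ ξ = 0} := ⟨⟨hξ.1, hlt⟩, hc⟩
        rw [hempty] at hmem
        exact Set.notMem_empty ξ hmem
    have hφ'a : deriv φ a ≠ 0 := hsimp a ⟨ha0, haπ.le⟩ hφa
    have hid := neumann_identity ϱ μ M φ hϱ hφ1 hφ2 hode hM a ha0 haπ hφa hφ'a hnz hbcπ
    have hest := interval_est ϱ μ M φ hϱ hφ1 hφ2 hM a Real.pi ha0 haπ (le_refl _)
      hqM (Dpos_Ioc M φ hM a Real.pi hφ'a hnz) (Real.pi / 2) hid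
    constructor
    · have := hest.1; push_cast; linarith
    · have := hest.2; push_cast; linarith [this]
  | succ n ih =>
    intro a ha0 haπ hφa hZ
    set Z := {ξ ∈ Set.Ioo a Real.pi | φ ξ = 0} with hZdef
    have hfin : Z.Finite := by
      apply Set.finite_of_encard_eq_coe hZ
    have hZne : Z.Nonempty := by
      rw [Set.nonempty_iff_ne_empty]
      intro h
      rw [h, Set.encard_empty] at hZ
      exact absurd hZ.symm (by simp)
    obtain ⟨x₁, hx₁Z, hmin⟩ := Set.exists_min_image Z id hfin hZne
    have hx₁mem : x₁ ∈ Set.Ioo a Real.pi := hx₁Z.1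
    have hφx₁ : φ x₁ = 0 := hx₁Z.2
    have hφ'a : deriv φ a ≠ 0 := hsimp a ⟨ha0, haπ.le⟩ hφa
    have hφ'x₁ : deriv φ x₁ ≠ 0 :=
      hsimp x₁ ⟨(lt_of_le_of_lt ha0 hx₁mem.1).le, hx₁mem.2.le⟩ hφx₁
    have hnz1 : ∀ ξ ∈ Set.Ioo a x₁, φ ξ ≠ 0 := by
      intro ξ hξ hc
      have hξZ : ξ ∈ Z := ⟨⟨hξ.1, lt_trans hξ.2 hx₁mem.2⟩, hc⟩
      have := hmin ξ hξZ
      simp only [id] at this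
      exact absurd hξ.2 (not_lt.mpr this)
    have hid1 := dirichlet_identity ϱ μ M φ hϱ hφ1 hφ2 hode hM a x₁ ha0 hx₁mem.1
      hx₁mem.2.le hφa hφ'a hφx₁ hφ'x₁ hnz1
    have hest1 := interval_est ϱ μ M φ hϱ hφ1 hφ2 hM a x₁ ha0 hx₁mem.1 hx₁mem.2.le
      hqM (Dpos_Ioo M φ hM a x₁ hφ'a hφ'x₁ hnz1) Real.pi hid1
    -- the remaining zeros
    have hZ' : {ξ ∈ Set.Ioo x₁ Real.pi | φ ξ = 0} = Z \ {x₁} := by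
      ext ξ
      constructor
      · rintro ⟨hξ, hφξ⟩
        exact ⟨⟨⟨lt_trans hx₁mem.1 hξ.1, hξ.2⟩, hφξ⟩, by
          simp only [Set.mem_singleton_iff]; exact (ne_of_gt hξ.1)⟩
      · rintro ⟨⟨hξ, hφξ⟩, hne⟩
        simp only [Set.mem_singleton_iff] at hne
        have := hmin ξ ⟨hξ, hφξ⟩
        simp only [id] at this
        exact ⟨⟨lt_of_le_of_ne this (Ne.symm hne), hξ.2⟩, hφξ⟩
    have hZ'card : {ξ ∈ Set.Ioo x₁ Real.pi | φ ξ = 0}.encard = n := by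
      rw [hZ', Set.encard_diff_singleton_of_mem hx₁Z, hZ]
      push_cast
      rfl
    have hih := ih x₁ (lt_of_le_of_lt ha0 hx₁mem.1).le hx₁mem.2 hφx₁ hZ'card
    have hqcont : ContinuousOn (fun t => μ - ϱ t) (Set.Icc 0 Real.pi) :=
      continuousOn_const.sub hϱ
    have hint1 : IntervalIntegrable (fun t => μ - ϱ t) MeasureTheory.volume a x₁ :=
      (hqcont.mono (Set.uIcc_subset_Icc ⟨ha0, haπ.le⟩
        ⟨(lt_of_le_of_lt ha0 hx₁mem.1).le, hx₁mem.2.le⟩)).intervalIntegrable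
    have hint2 : IntervalIntegrable (fun t => μ - ϱ t) MeasureTheory.volume x₁ Real.pi :=
      (hqcont.mono (Set.uIcc_subset_Icc ⟨(lt_of_le_of_lt ha0 hx₁mem.1).le, hx₁mem.2.le⟩
        ⟨Real.pi_pos.le, le_refl _⟩)).intervalIntegrable
    have hsplit : (∫ t in a..Real.pi, (μ - ϱ t)) =
        (∫ t in a..x₁, (μ - ϱ t)) + ∫ t in x₁..Real.pi, (μ - ϱ t) :=
      (intervalIntegral.integral_add_adjacent_intervals hint1 hint2).symm
    constructor
    · have h1 := hest1.1
      have h2 := hih.1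
      push_cast
      nlinarith [h1, h2]
    · rw [hsplit]
      have h1 := hest1.2
      have h2 := hih.2
      push_cast
      nlinarith [h1, h2]


/-- Two-sided eigenvalue bound (6.37) for the Dirichlet–Neumann Sturm–Liouville
problem: if `φ'' + (μ − ϱ)φ = 0`, `φ(0) = 0`, `φ'(π) = 0`, and `φ` has exactly
`n` zeros in `(0,π)`, then `(n + 1/2)² + ϱ₀ ≤ μ ≤ (n + 1/2)² + ϱ₁`. -/
theorem stmt_4
    (ϱ : ℝ → ℝ) (hϱ : ContinuousOn ϱ (Set.Icc 0 Real.pi))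
    (hϱpos : ∀ ξ ∈ Set.Icc 0 Real.pi, 0 < ϱ ξ)
    (ϱ₀ ϱ₁ : ℝ) (hϱ₀ : IsLeast (ϱ '' Set.Icc 0 Real.pi) ϱ₀)
    (hϱ₁ : ϱ₁ = (2 / Real.pi) * ∫ ξ in (0:ℝ)..Real.pi, ϱ ξ)
    (n : ℕ) (μ : ℝ) (φ : ℝ → ℝ) (hφ : ContDiff ℝ 2 φ)
    (hne : ∃ ξ ∈ Set.Icc 0 Real.pi, φ ξ ≠ 0)
    (hode : ∀ ξ ∈ Set.Icc 0 Real.pi, deriv (deriv φ) ξ + (μ - ϱ ξ) * φ ξ = 0)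
    (hbc0 : φ 0 = 0) (hbcπ : deriv φ Real.pi = 0)
    (hzeros : {ξ ∈ Set.Ioo 0 Real.pi | φ ξ = 0}.encard = n) :
    ((n : ℝ) + 1 / 2) ^ 2 + ϱ₀ ≤ μ ∧ μ ≤ ((n : ℝ) + 1 / 2) ^ 2 + ϱ₁ := by
  obtain ⟨hφ1, hφ2⟩ := diff_of_c2 hφ
  have hπ : (0:ℝ) < Real.pi := Real.pi_pos
  -- facts about ϱ₀
  have hϱ₀pos : 0 < ϱ₀ := by
    obtain ⟨ξ₀, hξ₀, hval⟩ := hϱ₀.1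
    rw [← hval]; exact hϱpos ξ₀ hξ₀
  have hϱlb : ∀ ξ ∈ Set.Icc 0 Real.pi, ϱ₀ ≤ ϱ ξ := fun ξ hξ =>
    hϱ₀.2 ⟨ξ, hξ, rfl⟩
  set M := μ - ϱ₀ with hMdef
  have hqM : ∀ ξ ∈ Set.Icc 0 Real.pi, μ - ϱ ξ ≤ M := fun ξ hξ => by
    have := hϱlb ξ hξ; rw [hMdef]; linarith
  -- simplicity of zeros
  have hsimp : ∀ c ∈ Set.Icc 0 Real.pi, φ c = 0 → deriv φ c ≠ 0 := by
    intro c hc h0 h1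
    obtain ⟨ξ, hξ, hφξ⟩ := hne
    exact hφξ (double_zero_forces_zero ϱ μ φ hϱ hφ hode c hc h0 h1 ξ hξ)
  have hφπ : φ Real.pi ≠ 0 := fun h =>
    hsimp Real.pi ⟨hπ.le, le_refl _⟩ h hbcπ
  -- positivity of M
  have hM : 0 < M := by
    by_contra hMn
    push_neg at hMn
    -- then φ² is convex with vanishing derivative at π, hence φ ≡ 0
    set h : ℝ → ℝ := fun ξ => φ ξ ^ 2 with hhdef
    have hder : ∀ ξ, HasDerivAt h (2 * φ ξ * deriv φ ξ) ξ := by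
      intro ξ
      have := ((hφ1 ξ).hasDerivAt.pow 2)
      simpa [hhdef, Pi.pow_def, mul_comm, mul_assoc, mul_left_comm] using this
    have hd : deriv h = fun ξ => 2 * φ ξ * deriv φ ξ := funext fun ξ => (hder ξ).deriv
    have hdercont : Continuous (deriv h) := by
      rw [hd]
      exact (continuous_const.mul hφ1.continuous).mul hφ2.continuous
    have hder2 : ∀ ξ, HasDerivAt (deriv h)
        (2 * deriv φ ξ * deriv φ ξ + 2 * φ ξ * deriv (deriv φ) ξ) ξ := by
      intro ξ
      rw [hd]
      have h1 : HasDerivAt (fun t => 2 * φ t) (2 * deriv φ ξ) ξ :=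
        (hφ1 ξ).hasDerivAt.const_mul 2
      have h2 : HasDerivAt (deriv φ) (deriv (deriv φ) ξ) ξ := (hφ2 ξ).hasDerivAt
      have := h1.mul h2
      simpa [Pi.mul_def] using this
    have hmono : MonotoneOn (deriv h) (Set.Icc 0 Real.pi) := by
      apply monotoneOn_of_deriv_nonneg (convex_Icc _ _) hdercont.continuousOn
      · intro ξ _
        exact (hder2 ξ).differentiableAt.differentiableWithinAt
      · intro ξ hξ
        rw [interior_Icc] at hξ
        rw [(hder2 ξ).deriv]
        have hξ' : ξ ∈ Set.Icc 0 Real.pi := ⟨hξ.1.le, hξ.2.le⟩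
        have hodeξ := hode ξ hξ'
        have hq : μ - ϱ ξ ≤ 0 := le_trans (hqM ξ hξ') hMn
        have hφ'' : deriv (deriv φ) ξ = -((μ - ϱ ξ) * φ ξ) := by linarith
        rw [hφ'']
        nlinarith [sq_nonneg (deriv φ ξ), sq_nonneg (φ ξ),
          mul_nonneg (neg_nonneg.mpr hq) (sq_nonneg (φ ξ))]
    have hd_nonpos : ∀ ξ ∈ Set.Icc 0 Real.pi, deriv h ξ ≤ 0 := by
      intro ξ hξ
      have := hmono hξ ⟨hπ.le, le_refl _⟩ hξ.2
      have hdπ : deriv h Real.pi = 0 := by rw [hd]; simp [hbcπ]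
      linarith [this, hdπ.le]
    have hanti : AntitoneOn h (Set.Icc 0 Real.pi) := by
      apply antitoneOn_of_deriv_nonpos (convex_Icc _ _)
      · exact ((hφ1.continuous.pow 2)).continuousOn
      · intro ξ _
        exact (hder ξ).differentiableAt.differentiableWithinAt
      · intro ξ hξ
        rw [interior_Icc] at hξ
        exact hd_nonpos ξ ⟨hξ.1.le, hξ.2.le⟩
    obtain ⟨ξ, hξ, hφξ⟩ := hne
    have h1 : h ξ ≤ h 0 := hanti ⟨le_refl _, hπ.le⟩ hξ hξ.1
    have h2 : h 0 = 0 := by simp [hhdef, hbc0]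
    have h3 : 0 ≤ h ξ := sq_nonneg _
    have h4 : h ξ = 0 := le_antisymm (h2 ▸ h1) h3
    exact hφξ (pow_eq_zero_iff (by norm_num) |>.mp h4)
  -- main induction
  have hmain := aux_induction ϱ μ M φ hϱ hφ1 hφ2 hode hbcπ hM hqM hsimp hφπ
    n 0 (le_refl 0) hπ hbc0 hzeros
  have hs := Real.sqrt_pos.mpr hM
  have hs2 : Real.sqrt M ^ 2 = M := Real.sq_sqrt hM.le
  have hlow : ((n : ℝ) + 1/2) ^ 2 ≤ M := by
    have h1 := hmain.1
    have h2 : ((n : ℝ) + 1/2) ≤ Real.sqrt M := by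
      have := h1
      rw [sub_zero] at this
      have hn0 : (0:ℝ) ≤ (n : ℝ) + 1/2 := by positivity
      nlinarith
    nlinarith [Real.sqrt_nonneg M]
  constructor
  · have : ((n : ℝ) + 1 / 2) ^ 2 + ϱ₀ ≤ M + ϱ₀ := by linarith [hlow]
    rw [hMdef] at this
    linarith
  · -- upper bound
    have h2 := hmain.2
    have hϱint : IntervalIntegrable ϱ MeasureTheory.volume 0 Real.pi :=
      (hϱ.mono (by rw [Set.uIcc_of_le hπ.le])).intervalIntegrable
    have hsplit : (∫ t in (0:ℝ)..Real.pi, (μ - ϱ t)) =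
        μ * Real.pi - ∫ t in (0:ℝ)..Real.pi, ϱ t := by
      rw [intervalIntegral.integral_sub intervalIntegrable_const hϱint]
      simp [mul_comm]
    rw [hsplit] at h2
    set I := ∫ t in (0:ℝ)..Real.pi, ϱ t with hIdef
    set lam := ((n : ℝ) + 1/2) ^ 2 with hlamdef
    have hAM : Real.sqrt M * ((n : ℝ) + 1/2) ≤ (M + lam) / 2 := by
      nlinarith [sq_nonneg (Real.sqrt M - ((n : ℝ) + 1/2)), hs2]
    have hkey : μ * Real.pi - I ≤ ((M + lam) / 2) * Real.pi := by
      calc μ * Real.pi - I ≤ Real.sqrt M * (((n : ℝ) + 1/2) * Real.pi) := h2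
        _ = (Real.sqrt M * ((n : ℝ) + 1/2)) * Real.pi := by ring
        _ ≤ ((M + lam) / 2) * Real.pi := by
            apply mul_le_mul_of_nonneg_right hAM hπ.le
    -- M = μ - ϱ₀
    rw [hMdef] at hkey
    -- conclude μ ≤ lam + (2/π) I
    rw [hϱ₁]
    have h2I : 2 / Real.pi * I * Real.pi = 2 * I := by field_simp
    nlinarith [hkey, hπ, hϱ₀pos, h2I]
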